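/- Let K = S + ℝ₊d be a first-order cone in ℝⁿ (S a subspace, d ∈ ℝⁿ), and let A₁, …, Aₘ be real symmetric n×n matrices such that Aᵢ = αᵢA₁ + βᵢA₂ for some reals αᵢ, βᵢ, for i = 3, …, m. Then max_{i=1,…,m} xᵀAᵢx ≥ 0 for all x ∈ K if and only if there exists t in the simplex Δₘ such that Σᵢ tᵢ xᵀAᵢx ≥ 0 for all x ∈ K. -/

import Mathlib

open Matrix

section HaeserAux

variable {n : ℕ}

private lemma hy_qcomb (M N : Matrix (Fin n) (Fin n) ℝ) (a b : ℝ) (x : Fin n → ℝ) :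
    x ⬝ᵥ (a • M + b • N) *ᵥ x = a * (x ⬝ᵥ M *ᵥ x) + b * (x ⬝ᵥ N *ᵥ x) := by
  simp [Matrix.add_mulVec, Matrix.smul_mulVec, dotProduct_add, dotProduct_smul,
    smul_eq_mul]

private lemma hy_qexpand (M : Matrix (Fin n) (Fin n) ℝ) (x y : Fin n → ℝ) (c : ℝ) :
    (x + c • y) ⬝ᵥ M *ᵥ (x + c • y)
      = x ⬝ᵥ M *ᵥ x + c * (x ⬝ᵥ M *ᵥ y + y ⬝ᵥ M *ᵥ x) + c ^ 2 * (y ⬝ᵥ M *ᵥ y) := by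
  simp only [Matrix.mulVec_add, Matrix.mulVec_smul, add_dotProduct, smul_dotProduct,
    dotProduct_add, dotProduct_smul, smul_eq_mul]
  ring

private lemma hy_qneg (M : Matrix (Fin n) (Fin n) ℝ) (x : Fin n → ℝ) :
    (-x) ⬝ᵥ M *ᵥ (-x) = x ⬝ᵥ M *ᵥ x := by
  simp [Matrix.mulVec_neg, dotProduct_neg, neg_dotProduct]

/-- Yuan's lemma for two quadratic forms on a subspace. -/
private lemma hy_yuan2 (V : Submodule ℝ (Fin n → ℝ)) (B C : Matrix (Fin n) (Fin n) ℝ)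
    (h : ∀ x ∈ V, x ⬝ᵥ B *ᵥ x < 0 → 0 ≤ x ⬝ᵥ C *ᵥ x) :
    ∃ s : ℝ, s ∈ Set.Icc (0:ℝ) 1 ∧
      ∀ x ∈ V, 0 ≤ s * (x ⬝ᵥ B *ᵥ x) + (1 - s) * (x ⬝ᵥ C *ᵥ x) := by
  by_contra hcon
  push_neg at hcon
  set U : Set ℝ := {s | ∃ x ∈ V,
      s * (x ⬝ᵥ B *ᵥ x) + (1 - s) * (x ⬝ᵥ C *ᵥ x) < 0 ∧ x ⬝ᵥ B *ᵥ x < 0} with hU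
  set W : Set ℝ := {s | ∃ x ∈ V,
      s * (x ⬝ᵥ B *ᵥ x) + (1 - s) * (x ⬝ᵥ C *ᵥ x) < 0 ∧ x ⬝ᵥ C *ᵥ x < 0} with hW
  have hopen : ∀ (P : (Fin n → ℝ) → Prop), IsOpen {s : ℝ | ∃ x ∈ V,
      s * (x ⬝ᵥ B *ᵥ x) + (1 - s) * (x ⬝ᵥ C *ᵥ x) < 0 ∧ P x} := by
    intro P
    rw [isOpen_iff_mem_nhds]
    rintro s ⟨x, hxV, hlt, hPx⟩
    have hcont : Continuous fun s' : ℝ =>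
        s' * (x ⬝ᵥ B *ᵥ x) + (1 - s') * (x ⬝ᵥ C *ᵥ x) :=
      (continuous_id.mul continuous_const).add
        ((continuous_const.sub continuous_id).mul continuous_const)
    have hmem : {s' : ℝ | s' * (x ⬝ᵥ B *ᵥ x) + (1 - s') * (x ⬝ᵥ C *ᵥ x) < 0} ∈ nhds s :=
      (isOpen_lt hcont continuous_const).mem_nhds hlt
    exact Filter.mem_of_superset hmem (fun s' hs' => ⟨x, hxV, hs', hPx⟩)
  have hUopen : IsOpen U := hopen _
  have hWopen : IsOpen W := hopen _
  have hcover : Set.Icc (0:ℝ) 1 ⊆ U ∪ W := by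
    rintro s ⟨hs0, hs1⟩
    obtain ⟨x, hxV, hx⟩ := hcon s ⟨hs0, hs1⟩
    by_cases hB : x ⬝ᵥ B *ᵥ x < 0
    · exact Or.inl ⟨x, hxV, hx, hB⟩
    · refine Or.inr ⟨x, hxV, hx, ?_⟩
      push_neg at hB
      nlinarith
  have h1U : (Set.Icc (0:ℝ) 1 ∩ U).Nonempty := by
    obtain ⟨x, hxV, hx⟩ := hcon 1 ⟨zero_le_one, le_refl 1⟩
    exact ⟨1, ⟨zero_le_one, le_refl 1⟩, ⟨x, hxV, hx, by linarith⟩⟩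
  have h0W : (Set.Icc (0:ℝ) 1 ∩ W).Nonempty := by
    obtain ⟨x, hxV, hx⟩ := hcon 0 ⟨le_refl 0, zero_le_one⟩
    exact ⟨0, ⟨le_refl 0, zero_le_one⟩, ⟨x, hxV, hx, by linarith⟩⟩
  obtain ⟨s, hsIcc, hsU, hsW⟩ := isPreconnected_Icc U W hUopen hWopen hcover h1U h0W
  obtain ⟨x, hxV, hφx, hBx⟩ := hsU
  obtain ⟨y', hyV', hφy', hCy'⟩ := hsW
  -- make the cross term nonpositive by possibly replacing y' with -y'
  obtain ⟨y, hyV, hφy, hb⟩ :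
      ∃ y ∈ V, (s * (y ⬝ᵥ B *ᵥ y) + (1 - s) * (y ⬝ᵥ C *ᵥ y) < 0 ∧ y ⬝ᵥ C *ᵥ y < 0) ∧
        s * (x ⬝ᵥ B *ᵥ y + y ⬝ᵥ B *ᵥ x) + (1 - s) * (x ⬝ᵥ C *ᵥ y + y ⬝ᵥ C *ᵥ x) ≤ 0 := by
    rcases le_or_gt
      (s * (x ⬝ᵥ B *ᵥ y' + y' ⬝ᵥ B *ᵥ x) + (1 - s) * (x ⬝ᵥ C *ᵥ y' + y' ⬝ᵥ C *ᵥ x)) 0 with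
      hble | hbgt
    · exact ⟨y', hyV', ⟨hφy', hCy'⟩, hble⟩
    · refine ⟨-y', V.neg_mem hyV', ⟨?_, ?_⟩, ?_⟩
      · rw [hy_qneg, hy_qneg]; exact hφy'
      · rw [hy_qneg]; exact hCy'
      · simp only [Matrix.mulVec_neg, dotProduct_neg, neg_dotProduct]
        linarith
  obtain ⟨hφy2, hCy⟩ := hφy
  obtain ⟨hs0, hs1⟩ := hsIcc
  -- second connectedness argument on [0, ∞) along the path x + c • y
  set P : Set ℝ := {c | (x + c • y) ⬝ᵥ B *ᵥ (x + c • y) < 0} with hP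
  set Q : Set ℝ := {c | (x + c • y) ⬝ᵥ C *ᵥ (x + c • y) < 0} with hQ
  have hPopen : IsOpen P := by
    have hPe : P = {c : ℝ | x ⬝ᵥ B *ᵥ x + c * (x ⬝ᵥ B *ᵥ y + y ⬝ᵥ B *ᵥ x)
        + c ^ 2 * (y ⬝ᵥ B *ᵥ y) < 0} :=
      Set.ext fun c => by rw [hP, Set.mem_setOf_eq, Set.mem_setOf_eq, hy_qexpand]
    rw [hPe]
    exact isOpen_lt ((continuous_const.add (continuous_id.mul continuous_const)).add
      ((continuous_pow 2).mul continuous_const)) continuous_const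
  have hQopen : IsOpen Q := by
    have hQe : Q = {c : ℝ | x ⬝ᵥ C *ᵥ x + c * (x ⬝ᵥ C *ᵥ y + y ⬝ᵥ C *ᵥ x)
        + c ^ 2 * (y ⬝ᵥ C *ᵥ y) < 0} :=
      Set.ext fun c => by rw [hQ, Set.mem_setOf_eq, Set.mem_setOf_eq, hy_qexpand]
    rw [hQe]
    exact isOpen_lt ((continuous_const.add (continuous_id.mul continuous_const)).add
      ((continuous_pow 2).mul continuous_const)) continuous_const
  have hcover2 : Set.Ici (0:ℝ) ⊆ P ∪ Q := by
    intro c hc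
    have hc0 : (0:ℝ) ≤ c := hc
    have hzV : x + c • y ∈ V := V.add_mem hxV (V.smul_mem c hyV)
    have hφz : s * ((x + c • y) ⬝ᵥ B *ᵥ (x + c • y))
        + (1 - s) * ((x + c • y) ⬝ᵥ C *ᵥ (x + c • y)) < 0 := by
      rw [hy_qexpand, hy_qexpand]
      nlinarith [sq_nonneg c, mul_nonpos_of_nonneg_of_nonpos hc0 hb,
        mul_nonpos_of_nonneg_of_nonpos (sq_nonneg c) (le_of_lt hφy2)]
    by_cases hBz : (x + c • y) ⬝ᵥ B *ᵥ (x + c • y) < 0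
    · exact Or.inl hBz
    · push_neg at hBz
      refine Or.inr ?_
      show (x + c • y) ⬝ᵥ C *ᵥ (x + c • y) < 0
      nlinarith
  have h0P : (Set.Ici (0:ℝ) ∩ P).Nonempty := by
    refine ⟨0, Set.mem_Ici.mpr (le_refl 0), ?_⟩
    show (x + (0:ℝ) • y) ⬝ᵥ B *ᵥ (x + (0:ℝ) • y) < 0
    simpa using hBx
  have hbigQ : (Set.Ici (0:ℝ) ∩ Q).Nonempty := by
    set q0 := x ⬝ᵥ C *ᵥ x with hq0
    set b2 := x ⬝ᵥ C *ᵥ y + y ⬝ᵥ C *ᵥ x with hb2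
    set q2 := y ⬝ᵥ C *ᵥ y with hq2
    set c := (|q0| + |b2| + 1) / (-q2) + 1 with hc
    have hq2neg : q2 < 0 := hCy
    have hq2pos : 0 < -q2 := by linarith
    have hfrac : 0 ≤ (|q0| + |b2| + 1) / (-q2) :=
      div_nonneg (by positivity) (le_of_lt hq2pos)
    have hc1 : 1 ≤ c := by rw [hc]; linarith
    have hc0 : (0:ℝ) ≤ c := by linarith
    have hkey : |q0| + |b2| + 1 ≤ c * (-q2) := by
      rw [hc, add_mul, div_mul_cancel₀ _ (ne_of_gt hq2pos)]
      linarith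
    refine ⟨c, Set.mem_Ici.mpr hc0, ?_⟩
    show (x + c • y) ⬝ᵥ C *ᵥ (x + c • y) < 0
    rw [hy_qexpand]
    have h1 : q0 ≤ |q0| := le_abs_self _
    have h2 : c * b2 ≤ c * |b2| := mul_le_mul_of_nonneg_left (le_abs_self _) hc0
    have h3 : c * (|q0| + |b2| + 1) ≤ c * (c * (-q2)) := mul_le_mul_of_nonneg_left hkey hc0
    have h4 : c ^ 2 * q2 = -(c * (c * (-q2))) := by ring
    nlinarith [mul_le_mul_of_nonneg_right hc1 (abs_nonneg q0),
      mul_le_mul_of_nonneg_right hc1 (abs_nonneg b2)]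
  obtain ⟨c, _hcIci, hcP, hcQ⟩ :=
    isPreconnected_Ici P Q hPopen hQopen hcover2 h0P hbigQ
  have hzV : x + c • y ∈ V := V.add_mem hxV (V.smul_mem c hyV)
  exact absurd (h _ hzV hcP) (not_le.mpr hcQ)

/-- The two "extreme" directions among finitely many vectors lying in an open half-plane
dominate all the others. -/
private lemma hy_slope {m : ℕ} (hm : 0 < m) (α β : Fin m → ℝ) (w₁ w₂ : ℝ)
    (hneg : ∀ i, α i * w₁ + β i * w₂ < 0) :
    ∃ j k : Fin m, ∀ g₁ g₂ : ℝ, α j * g₁ + β j * g₂ < 0 → α k * g₁ + β k * g₂ < 0 →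
      ∀ i, α i * g₁ + β i * g₂ < 0 := by
  have hmne : (Finset.univ : Finset (Fin m)).Nonempty := ⟨⟨0, hm⟩, Finset.mem_univ _⟩
  set lam : Fin m → ℝ := fun i => -(α i * w₁ + β i * w₂) with hlam
  set sv : Fin m → ℝ := fun i => -(α i) * w₂ + β i * w₁ with hsv
  have hlampos : ∀ i, 0 < lam i := fun i => by simp only [hlam]; linarith [hneg i]
  have hNpos : 0 < w₁ ^ 2 + w₂ ^ 2 := by
    rcases eq_or_ne w₁ 0 with h1 | h1
    · rcases eq_or_ne w₂ 0 with h2 | h2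
      · exfalso; have := hneg ⟨0, hm⟩; rw [h1, h2] at this; simp at this
      · positivity
    · positivity
  set N := w₁ ^ 2 + w₂ ^ 2 with hN
  have hid1 : ∀ i, N * α i = -(lam i) * w₁ - sv i * w₂ := by
    intro i; simp only [hlam, hsv, hN]; ring
  have hid2 : ∀ i, N * β i = -(lam i) * w₂ + sv i * w₁ := by
    intro i; simp only [hlam, hsv, hN]; ring
  obtain ⟨j, -, hj⟩ := Finset.exists_max_image Finset.univ (fun i => sv i / lam i) hmne
  obtain ⟨k, -, hk⟩ := Finset.exists_min_image Finset.univ (fun i => sv i / lam i) hmne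
  refine ⟨j, k, ?_⟩
  intro g₁ g₂ hPj hPk i
  have hrij : sv i * lam j ≤ sv j * lam i := by
    have := hj i (Finset.mem_univ i)
    rwa [div_le_div_iff₀ (hlampos i) (hlampos j)] at this
  have hrki : sv k * lam i ≤ sv i * lam k := by
    have := hk i (Finset.mem_univ i)
    rwa [div_le_div_iff₀ (hlampos k) (hlampos i)] at this
  have hrkj : sv k * lam j ≤ sv j * lam k := by
    have := hk j (Finset.mem_univ j)
    rwa [div_le_div_iff₀ (hlampos k) (hlampos j)] at this
  have hD : 0 ≤ sv j * lam k - sv k * lam j := by linarith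
  rcases lt_or_eq_of_le hD with hDpos | hDzero
  · -- main case: the extreme directions are distinct
    have ha : 0 ≤ sv i * lam k - sv k * lam i := by linarith
    have hbb : 0 ≤ sv j * lam i - sv i * lam j := by linarith
    have keyα : (sv j * lam k - sv k * lam j) * (N * α i)
        = (sv i * lam k - sv k * lam i) * (N * α j)
          + (sv j * lam i - sv i * lam j) * (N * α k) := by
      rw [hid1 i, hid1 j, hid1 k]; ring
    have keyβ : (sv j * lam k - sv k * lam j) * (N * β i)
        = (sv i * lam k - sv k * lam i) * (N * β j)
          + (sv j * lam i - sv i * lam j) * (N * β k) := by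
      rw [hid2 i, hid2 j, hid2 k]; ring
    have keyP : (sv j * lam k - sv k * lam j) * (N * (α i * g₁ + β i * g₂))
        = (sv i * lam k - sv k * lam i) * (N * (α j * g₁ + β j * g₂))
          + (sv j * lam i - sv i * lam j) * (N * (α k * g₁ + β k * g₂)) := by
      linear_combination g₁ * keyα + g₂ * keyβ
    have hNPj : N * (α j * g₁ + β j * g₂) < 0 := mul_neg_of_pos_of_neg hNpos hPj
    have hNPk : N * (α k * g₁ + β k * g₂) < 0 := mul_neg_of_pos_of_neg hNpos hPk
    have hab : 0 < (sv i * lam k - sv k * lam i) + (sv j * lam i - sv i * lam j) := by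
      rcases lt_or_eq_of_le ha with hapos | haz
      · rcases lt_or_eq_of_le hbb with hbpos | hbz
        · linarith
        · linarith
      · rcases lt_or_eq_of_le hbb with hbpos | hbz
        · linarith
        · exfalso
          have hzero : (sv j * lam k - sv k * lam j) * lam i = 0 := by
            linear_combination (- lam j) * haz + (- lam k) * hbz
          exact (mul_pos hDpos (hlampos i)).ne' hzero
    have hRHS : (sv i * lam k - sv k * lam i) * (N * (α j * g₁ + β j * g₂))
        + (sv j * lam i - sv i * lam j) * (N * (α k * g₁ + β k * g₂)) < 0 := by
      rcases lt_or_eq_of_le ha with hapos | haz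
      · have h1 := mul_neg_of_pos_of_neg hapos hNPj
        have h2 := mul_nonpos_of_nonneg_of_nonpos hbb hNPk.le
        linarith
      · have hbpos : 0 < sv j * lam i - sv i * lam j := by linarith
        have h1 := mul_neg_of_pos_of_neg hbpos hNPk
        have h2 := mul_nonpos_of_nonneg_of_nonpos ha hNPj.le
        linarith
    by_contra hge
    push_neg at hge
    have : 0 ≤ (sv j * lam k - sv k * lam j) * (N * (α i * g₁ + β i * g₂)) :=
      mul_nonneg hDpos.le (mul_nonneg hNpos.le hge)
    linarith [keyP ▸ this]
  · -- degenerate case: all directions coincide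
    have h1 : sv i * lam j * lam k ≤ sv j * lam i * lam k :=
      mul_le_mul_of_nonneg_right hrij (hlampos k).le
    have h2 : sv k * lam i * lam j ≤ sv i * lam k * lam j :=
      mul_le_mul_of_nonneg_right hrki (hlampos j).le
    have h3 : sv j * lam i * lam k = sv k * lam i * lam j := by
      linear_combination (- lam i) * hDzero
    have heq : sv i * lam j = sv j * lam i := by
      apply le_antisymm
      · exact le_of_mul_le_mul_right h1 (hlampos k)
      · have h4 : sv j * lam i * lam k ≤ sv i * lam j * lam k := by nlinarith [h2, h3]
        exact le_of_mul_le_mul_right h4 (hlampos k)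
    have keyα : lam j * (N * α i) = lam i * (N * α j) := by
      rw [hid1 i, hid1 j]; linear_combination (- w₂) * heq
    have keyβ : lam j * (N * β i) = lam i * (N * β j) := by
      rw [hid2 i, hid2 j]; linear_combination w₁ * heq
    have keyP : lam j * (N * (α i * g₁ + β i * g₂))
        = lam i * (N * (α j * g₁ + β j * g₂)) := by
      linear_combination g₁ * keyα + g₂ * keyβ
    have hNPj : N * (α j * g₁ + β j * g₂) < 0 := mul_neg_of_pos_of_neg hNpos hPj
    have hRHS : lam i * (N * (α j * g₁ + β j * g₂)) < 0 :=
      mul_neg_of_pos_of_neg (hlampos i) hNPj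
    by_contra hge
    push_neg at hge
    have : 0 ≤ lam j * (N * (α i * g₁ + β i * g₂)) :=
      mul_nonneg (hlampos j).le (mul_nonneg hNpos.le hge)
    linarith [keyP ▸ this]

/-- Gordan-type alternative in the plane. -/
private lemma hy_gordan {m : ℕ} (hm : 0 < m) (α β : Fin m → ℝ)
    (h : ∀ w₁ w₂ : ℝ, ∃ i, 0 ≤ α i * w₁ + β i * w₂) :
    ∃ t : Fin m → ℝ, (∀ i, 0 ≤ t i) ∧ (∑ i, t i = 1) ∧
      (∑ i, t i * α i = 0) ∧ (∑ i, t i * β i = 0) := by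
  classical
  set v : Fin m → ℝ × ℝ := fun i => (α i, β i) with hv
  have hfin : (Set.range v).Finite := Set.finite_range v
  have hfv : ∀ (f : (ℝ × ℝ) →L[ℝ] ℝ) (p : ℝ × ℝ),
      f p = p.1 * f ((1:ℝ), (0:ℝ)) + p.2 * f ((0:ℝ), (1:ℝ)) := by
    intro f p
    have hp : p = p.1 • ((1:ℝ), (0:ℝ)) + p.2 • ((0:ℝ), (1:ℝ)) := by
      ext <;> simp
    conv_lhs => rw [hp]
    rw [map_add, _root_.map_smul, _root_.map_smul, smul_eq_mul, smul_eq_mul]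
  have h0mem : (0 : ℝ × ℝ) ∈ convexHull ℝ (Set.range v) := by
    by_contra h0
    obtain ⟨f, u, hfu, hu⟩ := geometric_hahn_banach_point_closed
      (convex_convexHull ℝ _) (hfin.isCompact_convexHull ℝ).isClosed h0
    rw [map_zero] at hfu
    obtain ⟨i, hi⟩ := h (-(f ((1:ℝ), (0:ℝ)))) (-(f ((0:ℝ), (1:ℝ))))
    have hvi : v i ∈ convexHull ℝ (Set.range v) :=
      subset_convexHull ℝ _ (Set.mem_range_self i)
    have h2 := hu _ hvi
    have h3 : f (v i) = α i * f ((1:ℝ), (0:ℝ)) + β i * f ((0:ℝ), (1:ℝ)) := hfv f (v i)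
    rw [h3] at h2
    nlinarith
  rw [hfin.convexHull_eq] at h0mem
  obtain ⟨w, hw0, hw1, hwc⟩ := h0mem
  rw [Finset.centerMass_eq_of_sum_1 _ _ hw1] at hwc
  simp only [id_eq] at hwc
  set g : ℝ × ℝ → Fin m := fun y => if hy : ∃ i, v i = y then hy.choose else ⟨0, hm⟩
    with hgdef
  have hg : ∀ y ∈ hfin.toFinset, v (g y) = y := by
    intro y hy
    rw [Set.Finite.mem_toFinset] at hy
    obtain ⟨i, hi⟩ := hy
    have hex : ∃ i, v i = y := ⟨i, hi⟩
    simp only [hgdef, dif_pos hex]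
    exact hex.choose_spec
  refine ⟨fun i => ∑ y ∈ hfin.toFinset.filter (fun y => g y = i), w y, ?_, ?_, ?_, ?_⟩
  · intro i
    apply Finset.sum_nonneg
    intro y hy
    exact hw0 y (Set.Finite.mem_toFinset hfin |>.mp (Finset.mem_filter.mp hy).1)
  · rw [Finset.sum_fiberwise_of_maps_to (fun y _ => Finset.mem_univ (g y)) w]
    exact hw1
  · have hproj : ∑ y ∈ hfin.toFinset, w y * y.1 = 0 := by
      have hfst := congrArg Prod.fst hwc
      rw [Prod.fst_sum] at hfst
      simpa using hfst
    rw [← hproj, ← Finset.sum_fiberwise_of_maps_to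
      (fun y _ => Finset.mem_univ (g y)) (fun y => w y * y.1)]
    apply Finset.sum_congr rfl
    intro i _
    rw [Finset.sum_mul]
    apply Finset.sum_congr rfl
    intro y hy
    obtain ⟨hy1, hy2⟩ := Finset.mem_filter.mp hy
    have hy3 : y.1 = α i := by
      rw [← hg y hy1, hy2]
    rw [hy3]
  · have hproj : ∑ y ∈ hfin.toFinset, w y * y.2 = 0 := by
      have hsnd := congrArg Prod.snd hwc
      rw [Prod.snd_sum] at hsnd
      simpa using hsnd
    rw [← hproj, ← Finset.sum_fiberwise_of_maps_to
      (fun y _ => Finset.mem_univ (g y)) (fun y => w y * y.2)]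
    apply Finset.sum_congr rfl
    intro i _
    rw [Finset.sum_mul]
    apply Finset.sum_congr rfl
    intro y hy
    obtain ⟨hy1, hy2⟩ := Finset.mem_filter.mp hy
    have hy3 : y.2 = β i := by
      rw [← hg y hy1, hy2]
    rw [hy3]

end HaeserAux

theorem haeser_extended_yuan (n m : ℕ) (hm : 2 ≤ m)
    (S : Submodule ℝ (Fin n → ℝ)) (d : Fin n → ℝ)
    (K : Set (Fin n → ℝ))
    (hK : K = {x | ∃ u ∈ S, ∃ c : ℝ, 0 ≤ c ∧ x = u + c • d})
    (A : Fin m → Matrix (Fin n) (Fin n) ℝ)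
    (hsym : ∀ i, (A i).IsSymm)
    (hgen : ∀ i, ∃ α β : ℝ,
      A i = α • A ⟨0, by omega⟩ + β • A ⟨1, by omega⟩) :
    (∀ x ∈ K, ∃ i, 0 ≤ x ⬝ᵥ (A i) *ᵥ x) ↔
    (∃ t : Fin m → ℝ, (∀ i, 0 ≤ t i) ∧ (∑ i, t i = 1) ∧
      ∀ x ∈ K, 0 ≤ ∑ i, t i * (x ⬝ᵥ (A i) *ᵥ x)) := by
  constructor
  · intro hmax
    classical
    choose α β hαβ using hgen
    set V : Submodule ℝ (Fin n → ℝ) := S ⊔ Submodule.span ℝ {d} with hVdef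
    have hKV : K ⊆ (V : Set (Fin n → ℝ)) := by
      intro x hx
      rw [hK] at hx
      obtain ⟨u, huS, c, hc0, rfl⟩ := hx
      exact V.add_mem (Submodule.mem_sup_left huS)
        (Submodule.mem_sup_right
          (Submodule.smul_mem _ c (Submodule.mem_span_singleton_self d)))
    have hVK : ∀ x ∈ V, x ∈ K ∨ -x ∈ K := by
      intro x hx
      obtain ⟨u, huS, z, hz, rfl⟩ := Submodule.mem_sup.mp hx
      obtain ⟨c, rfl⟩ := Submodule.mem_span_singleton.mp hz
      rcases le_or_gt 0 c with hc | hc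
      · left; rw [hK]; exact ⟨u, huS, c, hc, rfl⟩
      · right; rw [hK]
        exact ⟨-u, S.neg_mem huS, -c, by linarith, by module⟩
    have hmaxV : ∀ x ∈ V, ∃ i, 0 ≤ x ⬝ᵥ A i *ᵥ x := by
      intro x hx
      rcases hVK x hx with hxK | hxK
      · exact hmax x hxK
      · obtain ⟨i, hi⟩ := hmax _ hxK
        exact ⟨i, by rwa [hy_qneg] at hi⟩
    have hq : ∀ i (x : Fin n → ℝ), x ⬝ᵥ A i *ᵥ x
        = α i * (x ⬝ᵥ A ⟨0, by omega⟩ *ᵥ x) + β i * (x ⬝ᵥ A ⟨1, by omega⟩ *ᵥ x) := by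
      intro i x
      conv_lhs => rw [hαβ i]
      exact hy_qcomb _ _ _ _ x
    by_cases hO : ∃ w₁ w₂ : ℝ, ∀ i, α i * w₁ + β i * w₂ < 0
    · obtain ⟨w₁, w₂, hw⟩ := hO
      obtain ⟨j, k, hjk⟩ := hy_slope (by omega) α β w₁ w₂ hw
      have hyuan : ∀ x ∈ V, x ⬝ᵥ A j *ᵥ x < 0 → 0 ≤ x ⬝ᵥ A k *ᵥ x := by
        intro x hxV hj
        by_contra hk
        push_neg at hk
        obtain ⟨i, hi⟩ := hmaxV x hxV
        have hlt := hjk (x ⬝ᵥ A ⟨0, by omega⟩ *ᵥ x) (x ⬝ᵥ A ⟨1, by omega⟩ *ᵥ x)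
          (by rw [← hq]; exact hj) (by rw [← hq]; exact hk) i
        rw [← hq] at hlt
        linarith
      obtain ⟨s, hsIcc, hsol⟩ := hy_yuan2 V (A j) (A k) hyuan
      refine ⟨fun i => (if i = j then s else 0) + (if i = k then 1 - s else 0),
        ?_, ?_, ?_⟩
      · intro i
        have h1 := hsIcc.1
        have h2 := hsIcc.2
        dsimp only
        split_ifs <;> simp <;> linarith
      · rw [Finset.sum_add_distrib]
        simp [Finset.sum_ite_eq']
      · intro x hxK
        have hx := hsol x (hKV hxK)
        have heq : ∑ i, ((if i = j then s else 0) + (if i = k then 1 - s else 0))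
              * (x ⬝ᵥ A i *ᵥ x)
            = s * (x ⬝ᵥ A j *ᵥ x) + (1 - s) * (x ⬝ᵥ A k *ᵥ x) := by
          simp_rw [add_mul, ite_mul, zero_mul]
          rw [Finset.sum_add_distrib]
          simp [Finset.sum_ite_eq']
        rw [heq]
        linarith
    · push_neg at hO
      have hO' : ∀ w₁ w₂ : ℝ, ∃ i, 0 ≤ α i * w₁ + β i * w₂ := by
        intro w₁ w₂
        obtain ⟨i, hi⟩ := hO w₁ w₂
        exact ⟨i, hi⟩
      obtain ⟨t, ht0, ht1, htα, htβ⟩ := hy_gordan (by omega) α β hO'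
      refine ⟨t, ht0, ht1, ?_⟩
      intro x _
      have hsum : ∑ i, t i * (x ⬝ᵥ A i *ᵥ x)
          = (∑ i, t i * α i) * (x ⬝ᵥ A ⟨0, by omega⟩ *ᵥ x)
            + (∑ i, t i * β i) * (x ⬝ᵥ A ⟨1, by omega⟩ *ᵥ x) := by
        rw [Finset.sum_mul, Finset.sum_mul, ← Finset.sum_add_distrib]
        apply Finset.sum_congr rfl
        intro i _
        rw [hq i x]
        ring
      rw [hsum, htα, htβ]
      simp
  · rintro ⟨t, ht0, ht1, hsol⟩ x hxK
    by_contra hneg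
    push_neg at hneg
    have hi0 : ∃ i, 0 < t i := by
      by_contra hno
      push_neg at hno
      have hz : ∀ i ∈ Finset.univ, t i = 0 := fun i _ => le_antisymm (hno i) (ht0 i)
      rw [Finset.sum_congr rfl hz] at ht1
      simp at ht1
    obtain ⟨i₀, hi₀⟩ := hi0
    have hlt : ∑ i, t i * (x ⬝ᵥ A i *ᵥ x) < ∑ _i : Fin m, (0:ℝ) := by
      apply Finset.sum_lt_sum
      · intro i _
        exact mul_nonpos_of_nonneg_of_nonpos (ht0 i) (hneg i).le
      · exact ⟨i₀, Finset.mem_univ _, mul_neg_of_pos_of_neg hi₀ (hneg i₀)⟩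
    simp only [Finset.sum_const_zero] at hlt
    linarith [hsol x hxK]
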